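/- The image of the homomorphism ψ : F⁻¹(Λ)/Λ → Λ/F(Λ), x + Λ ↦ F(x) + F(Λ), is exactly the torsion subgroup Tor(Λ/F(Λ)); consequently ψ induces a group isomorphism between the quotient (F⁻¹(Λ)/Λ) / ((ker F + Λ)/Λ) and Tor(Λ/F(Λ)). -/

import Mathlib

lemma my_finite_order {t : Type*} [NormedAddCommGroup t] [InnerProductSpace ℝ t]
    [FiniteDimensional ℝ t]
    (Λ : Submodule ℤ t) [DiscreteTopology Λ]
    (hspan : Submodule.span ℝ (Λ : Set t) = ⊤)
    (L : t ≃ₗᵢ[ℝ] t) (hL : ∀ x ∈ Λ, L x ∈ Λ) :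
    ∃ m : ℕ, 0 < m ∧ ∀ y, (L ^ m) y = y := by
  haveI : IsZLattice ℝ Λ := ⟨hspan⟩
  haveI := ZLattice.module_finite ℝ Λ
  obtain ⟨n, s, hs⟩ := Module.Finite.exists_fin (R := ℤ) (M := Λ)
  have hpowmem : ∀ (k : ℕ) (x : t), x ∈ Λ → (L ^ k) x ∈ Λ := by
    intro k
    induction k with
    | zero => intro x hx; simpa using hx
    | succ k ih =>
        intro x hx
        have : (L ^ (k + 1)) x = (L ^ k) (L x) := by
          rw [pow_succ, LinearIsometryEquiv.coe_mul, Function.comp_apply]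
        rw [this]
        exact ih _ (hL x hx)
  have hOfin : ∀ i : Fin n, (((Λ : Set t)) ∩ Metric.closedBall 0 ‖(s i : t)‖).Finite := by
    intro i
    have hclosed : IsClosed (Λ : Set t) := by
      haveI : DiscreteTopology Λ.toAddSubgroup := ‹DiscreteTopology Λ›
      exact AddSubgroup.isClosed_of_discrete (H := Λ.toAddSubgroup)
    have hcomp : IsCompact ((Λ : Set t) ∩ Metric.closedBall 0 ‖(s i : t)‖) :=
      (isCompact_closedBall (0 : t) _).of_isClosed_subset
        (hclosed.inter Metric.isClosed_closedBall) Set.inter_subset_right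
    haveI : DiscreteTopology ((Λ : Set t) ∩ Metric.closedBall 0 ‖(s i : t)‖ : Set t) :=
      DiscreteTopology.of_subset (‹DiscreteTopology Λ›) Set.inter_subset_left
    exact hcomp.finite (isDiscrete_iff_discreteTopology.mpr this)
  set g : ℕ → (Fin n → t) := fun k i => (L ^ k) (s i) with hg
  have hmaps : Set.MapsTo g Set.univ
      (Set.univ.pi fun i => ((Λ : Set t)) ∩ Metric.closedBall 0 ‖(s i : t)‖) := by
    intro k _ i _
    refine ⟨hpowmem k _ (s i).2, ?_⟩
    rw [Metric.mem_closedBall, dist_zero_right]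
    exact le_of_eq ((L ^ k).norm_map _)
  obtain ⟨k, -, l, -, hne, heq⟩ :=
    Set.infinite_univ.exists_ne_map_eq_of_mapsTo hmaps
      (Set.Finite.pi fun i => hOfin i)
  wlog hkl : k < l generalizing k l
  · exact this l k hne.symm heq.symm ((hne.lt_or_gt).resolve_left hkl)
  refine ⟨l - k, Nat.sub_pos_of_lt hkl, ?_⟩
  have hfixs : ∀ i, (L ^ (l - k)) ((s i : t)) = s i := by
    intro i
    have hmul : (L ^ k) * (L ^ (l - k)) = L ^ l := by
      rw [← pow_add, Nat.add_sub_cancel' hkl.le]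
    have h1 : (L ^ k) ((L ^ (l - k)) (s i : t)) = (L ^ k) (s i : t) := by
      have : (L ^ k) ((L ^ (l - k)) (s i : t)) = (L ^ l) (s i : t) := by
        rw [← hmul, LinearIsometryEquiv.coe_mul, Function.comp_apply]
      rw [this]
      exact (congrFun heq i).symm
    exact (L ^ k).injective h1
  have hsub : (Λ : Set t) ⊆
      (Submodule.span ℤ (Set.range fun i => ((s i : t))) : Set t) := by
    intro x hx
    have h2 : Submodule.map Λ.subtype (Submodule.span ℤ (Set.range s)) =
        Submodule.span ℤ (Set.range fun i => ((s i : t))) := by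
      rw [Submodule.map_span]
      congr 1
      ext y
      simp [Set.range_comp]
    have h3 : (⟨x, hx⟩ : Λ) ∈ Submodule.span ℤ (Set.range s) := hs ▸ Submodule.mem_top
    rw [← h2]
    exact ⟨⟨x, hx⟩, h3, rfl⟩
  have hspan' : Submodule.span ℝ (Set.range fun i => ((s i : t))) = ⊤ := by
    have h4 : Submodule.span ℝ (Λ : Set t) ≤
        Submodule.span ℝ ((Submodule.span ℤ (Set.range fun i => ((s i : t)))) : Set t) :=
      Submodule.span_mono hsub
    rw [hspan, Submodule.span_span_of_tower] at h4
    exact top_unique h4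
  have hid : ((L ^ (l - k)).toLinearEquiv : t →ₗ[ℝ] t) = LinearMap.id := by
    apply LinearMap.ext_on hspan'
    rintro x ⟨i, rfl⟩
    simpa using hfixs i
  intro y
  have := DFunLike.congr_fun hid y
  simpa using this

open Finset in
lemma my_telescope {t : Type*} [NormedAddCommGroup t] [InnerProductSpace ℝ t]
    (L : t ≃ₗᵢ[ℝ] t) (F : t →ₗ[ℝ] t) (hF : ∀ x, F x = L x - x)
    (m : ℕ) (hm : ∀ y, (L ^ m) y = y) (x : t) :
    F (∑ k ∈ Finset.range m, (k : ℤ) • (L ^ k) (F x)) = (m : ℤ) • F x := by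
  have hpow : ∀ (k : ℕ) (y : t), (L ^ (k + 1)) y = L ((L ^ k) y) := by
    intro k y
    rw [pow_succ', LinearIsometryEquiv.coe_mul, Function.comp_apply]
  have hpow' : ∀ (k : ℕ) (y : t), (L ^ (k + 1)) y = (L ^ k) (L y) := by
    intro k y
    rw [pow_succ, LinearIsometryEquiv.coe_mul, Function.comp_apply]
  have hFL : ∀ k : ℕ, F ((L ^ k) (F x)) = (L ^ (k + 1)) (F x) - (L ^ k) (F x) := by
    intro k
    rw [hF ((L ^ k) (F x)), hpow]
  have hsum0 : ∑ k ∈ Finset.range m, (L ^ k) (F x) = 0 := by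
    have : ∀ k ∈ Finset.range m, (L ^ k) (F x) = (L ^ (k + 1)) x - (L ^ k) x := by
      intro k _
      rw [hF x, map_sub, hpow']
    rw [Finset.sum_congr rfl this, Finset.sum_range_sub (fun k => (L ^ k) x), hm]
    simp
  have step1 : F (∑ k ∈ Finset.range m, (k : ℤ) • (L ^ k) (F x)) =
      ∑ k ∈ Finset.range m, (k : ℤ) • ((L ^ (k + 1)) (F x) - (L ^ k) (F x)) := by
    rw [map_sum]
    refine Finset.sum_congr rfl fun k _ => ?_
    rw [map_zsmul, hFL]
  rw [step1]
  have step2 : ∀ k ∈ Finset.range m,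
      (k : ℤ) • ((L ^ (k + 1)) (F x) - (L ^ k) (F x)) =
      (((k + 1 : ℕ) : ℤ) • (L ^ (k + 1)) (F x) - (k : ℤ) • (L ^ k) (F x))
        - (L ^ (k + 1)) (F x) := by
    intro k _
    push_cast
    rw [smul_sub, add_smul, one_smul]
    abel
  rw [Finset.sum_congr rfl step2, Finset.sum_sub_distrib,
    Finset.sum_range_sub (fun k => (k : ℤ) • (L ^ k) (F x))]
  have step3 : ∑ k ∈ Finset.range m, (L ^ (k + 1)) (F x) = 0 := by
    have : ∀ k ∈ Finset.range m, (L ^ (k + 1)) (F x) = L ((L ^ k) (F x)) := fun k _ => hpow k _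
    rw [Finset.sum_congr rfl this, ← map_sum, hsum0, map_zero]
  rw [step3, hm]
  simp

/-- The image of the homomorphism `ψ : F⁻¹(Λ)/Λ → Λ/F(Λ)`,
`x + Λ ↦ F x + F(Λ)`, is exactly the torsion subgroup `Tor(Λ/F(Λ))`; consequently `ψ`
induces a group isomorphism `(F⁻¹(Λ)/Λ) / ((ker F + Λ)/Λ) ≃ Tor(Λ/F(Λ))`. -/
theorem stmt_2 {t : Type*} [NormedAddCommGroup t] [InnerProductSpace ℝ t]
    [FiniteDimensional ℝ t]
    (Λ : Submodule ℤ t) [DiscreteTopology Λ]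
    (hspan : Submodule.span ℝ (Λ : Set t) = ⊤)
    (L : t ≃ₗᵢ[ℝ] t) (hL : ⇑L '' (Λ : Set t) = (Λ : Set t))
    (F : t →ₗ[ℝ] t) (hF : ∀ x, F x = L x - x)
    (ψ : (AddSubgroup.map (QuotientAddGroup.mk' Λ.toAddSubgroup)
            (Λ.toAddSubgroup.comap F.toAddMonoidHom)) →+
          (Λ.toAddSubgroup ⧸
            (AddSubgroup.map F.toAddMonoidHom Λ.toAddSubgroup).addSubgroupOf Λ.toAddSubgroup))
    (hψ : ∀ (x : t) (hx : F x ∈ Λ),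
        ψ ⟨QuotientAddGroup.mk' Λ.toAddSubgroup x, AddSubgroup.mem_map.mpr ⟨x, hx, rfl⟩⟩ =
          QuotientAddGroup.mk ⟨F x, hx⟩) :
    ψ.range = AddCommGroup.torsion
        (Λ.toAddSubgroup ⧸
          (AddSubgroup.map F.toAddMonoidHom Λ.toAddSubgroup).addSubgroupOf Λ.toAddSubgroup) ∧
    ∃ e : ((AddSubgroup.map (QuotientAddGroup.mk' Λ.toAddSubgroup)
            (Λ.toAddSubgroup.comap F.toAddMonoidHom)) ⧸
            (((LinearMap.ker F).toAddSubgroup.map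
              (QuotientAddGroup.mk' Λ.toAddSubgroup)).addSubgroupOf
              (AddSubgroup.map (QuotientAddGroup.mk' Λ.toAddSubgroup)
                (Λ.toAddSubgroup.comap F.toAddMonoidHom)))) ≃+
          AddCommGroup.torsion
            (Λ.toAddSubgroup ⧸
              (AddSubgroup.map F.toAddMonoidHom Λ.toAddSubgroup).addSubgroupOf Λ.toAddSubgroup),
      ∀ x, (e (QuotientAddGroup.mk x) : Λ.toAddSubgroup ⧸
              (AddSubgroup.map F.toAddMonoidHom Λ.toAddSubgroup).addSubgroupOf Λ.toAddSubgroup)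
            = ψ x := by
  have hLmem : ∀ x ∈ Λ, L x ∈ Λ := by
    intro x hx
    have : L x ∈ ⇑L '' (Λ : Set t) := ⟨x, hx, rfl⟩
    rwa [hL] at this
  have hFmem : ∀ x ∈ Λ, F x ∈ Λ := by
    intro x hx
    rw [hF]
    exact sub_mem (hLmem x hx) hx
  obtain ⟨m, hm0, hmfix⟩ := my_finite_order Λ hspan L hLmem
  have hpowmem : ∀ (k : ℕ) (x : t), x ∈ Λ → (L ^ k) x ∈ Λ := by
    intro k
    induction k with
    | zero => intro x hx; simpa using hx
    | succ k ih =>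
        intro x hx
        have : (L ^ (k + 1)) x = (L ^ k) (L x) := by
          rw [pow_succ, LinearIsometryEquiv.coe_mul, Function.comp_apply]
        rw [this]
        exact ih _ (hLmem x hx)
  have hkey : ∀ y : t, F y ∈ Λ → ∃ lam ∈ Λ, F lam = (m : ℤ) • F y := by
    intro y hy
    refine ⟨∑ k ∈ Finset.range m, (k : ℤ) • (L ^ k) (F y), ?_, my_telescope L F hF m hmfix y⟩
    exact Submodule.sum_mem _ fun k _ => Submodule.smul_mem _ _ (hpowmem k _ hy)
  have hrange : ψ.range = AddCommGroup.torsion _ := by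
    ext c
    constructor
    · rintro ⟨d, rfl⟩
      obtain ⟨y, hy, hyd⟩ := d.2
      have hy' : F y ∈ Λ := hy
      have hd : d = ⟨QuotientAddGroup.mk' Λ.toAddSubgroup y,
          AddSubgroup.mem_map.mpr ⟨y, hy', rfl⟩⟩ := Subtype.ext hyd.symm
      rw [hd, hψ y hy']
      refine (isOfFinAddOrder_iff_nsmul_eq_zero).mpr ⟨m, hm0, ?_⟩
      obtain ⟨lam, hlam, hlamF⟩ := hkey y hy'
      have h1 : (m • (QuotientAddGroup.mk (⟨F y, hy'⟩ : Λ.toAddSubgroup)) :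
          Λ.toAddSubgroup ⧸ (AddSubgroup.map F.toAddMonoidHom
            Λ.toAddSubgroup).addSubgroupOf Λ.toAddSubgroup)
          = QuotientAddGroup.mk (m • (⟨F y, hy'⟩ : Λ.toAddSubgroup)) :=
        (map_nsmul (QuotientAddGroup.mk' ((AddSubgroup.map F.toAddMonoidHom
            Λ.toAddSubgroup).addSubgroupOf Λ.toAddSubgroup)) m
            (⟨F y, hy'⟩ : Λ.toAddSubgroup)).symm
      rw [h1, QuotientAddGroup.eq_zero_iff, AddSubgroup.mem_addSubgroupOf]
      refine AddSubgroup.mem_map.mpr ⟨lam, hlam, ?_⟩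
      have : F.toAddMonoidHom lam = F lam := rfl
      rw [this, hlamF, natCast_zsmul]
      rfl
    · intro hc
      obtain ⟨z, rfl⟩ := QuotientAddGroup.mk_surjective c
      have hc' : IsOfFinAddOrder (QuotientAddGroup.mk z :
          Λ.toAddSubgroup ⧸ (AddSubgroup.map F.toAddMonoidHom
            Λ.toAddSubgroup).addSubgroupOf Λ.toAddSubgroup) := hc
      obtain ⟨nn, hn0, hnz⟩ := isOfFinAddOrder_iff_nsmul_eq_zero.mp hc'
      have h2 : nn • z ∈ (AddSubgroup.map F.toAddMonoidHom
          Λ.toAddSubgroup).addSubgroupOf Λ.toAddSubgroup := by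
        rw [← QuotientAddGroup.eq_zero_iff]
        exact (map_nsmul (QuotientAddGroup.mk' ((AddSubgroup.map F.toAddMonoidHom
            Λ.toAddSubgroup).addSubgroupOf Λ.toAddSubgroup)) nn z).trans hnz
      rw [AddSubgroup.mem_addSubgroupOf] at h2
      obtain ⟨μ, hμ, hμF⟩ := AddSubgroup.mem_map.mp h2
      have hμF' : F μ = nn • (z : t) := by
        have : ((nn • z : Λ.toAddSubgroup) : t) = nn • (z : t) := rfl
        rw [← this]; exact hμF
      set x := (nn : ℝ)⁻¹ • μ with hx
      have hFx : F x = (z : t) := by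
        rw [hx, map_smul, hμF', ← Nat.cast_smul_eq_nsmul ℝ, smul_smul,
          inv_mul_cancel₀ (by exact_mod_cast hn0.ne'), one_smul]
      have hFxΛ : F x ∈ Λ := hFx ▸ z.2
      refine ⟨⟨QuotientAddGroup.mk' Λ.toAddSubgroup x,
        AddSubgroup.mem_map.mpr ⟨x, hFxΛ, rfl⟩⟩, ?_⟩
      rw [hψ x hFxΛ]
      exact congrArg _ (Subtype.ext hFx)
  have hker : (((LinearMap.ker F).toAddSubgroup.map
      (QuotientAddGroup.mk' Λ.toAddSubgroup)).addSubgroupOf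
      (AddSubgroup.map (QuotientAddGroup.mk' Λ.toAddSubgroup)
        (Λ.toAddSubgroup.comap F.toAddMonoidHom))) = ψ.ker := by
    ext d
    rw [AddSubgroup.mem_addSubgroupOf, AddMonoidHom.mem_ker]
    obtain ⟨y, hy, hyd⟩ := d.2
    have hy' : F y ∈ Λ := hy
    have hd : d = ⟨QuotientAddGroup.mk' Λ.toAddSubgroup y,
        AddSubgroup.mem_map.mpr ⟨y, hy', rfl⟩⟩ := Subtype.ext hyd.symm
    constructor
    · intro hmem
      obtain ⟨z, hz, hzd⟩ := AddSubgroup.mem_map.mp hmem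
      have hz0 : F z = 0 := hz
      rw [hd, hψ y hy', QuotientAddGroup.eq_zero_iff, AddSubgroup.mem_addSubgroupOf]
      have hyz : -y + z ∈ Λ := by
        have : (QuotientAddGroup.mk y : t ⧸ Λ.toAddSubgroup) = QuotientAddGroup.mk z := by
          show QuotientAddGroup.mk' Λ.toAddSubgroup y = QuotientAddGroup.mk' Λ.toAddSubgroup z
          rw [hyd, hzd]
        exact (QuotientAddGroup.eq).mp this
      have hyzΛ : y - z ∈ Λ := by
        have h5 : y - z = -(-y + z) := by abel
        rw [h5]
        exact neg_mem hyz
      refine AddSubgroup.mem_map.mpr ⟨y - z, hyzΛ, ?_⟩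
      show F (y - z) = F y
      rw [map_sub, hz0, sub_zero]
    · intro hψ0
      rw [hd, hψ y hy', QuotientAddGroup.eq_zero_iff, AddSubgroup.mem_addSubgroupOf] at hψ0
      obtain ⟨μ, hμ, hμF⟩ := AddSubgroup.mem_map.mp hψ0
      have hμF' : F μ = F y := hμF
      refine AddSubgroup.mem_map.mpr ⟨y - μ, ?_, ?_⟩
      · show y - μ ∈ LinearMap.ker F
        rw [LinearMap.mem_ker, map_sub, hμF', sub_self]
      · rw [← hyd]
        show QuotientAddGroup.mk (y - μ) = QuotientAddGroup.mk y
        refine (QuotientAddGroup.eq).mpr ?_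
        have h6 : -(y - μ) + y = μ := by abel
        rw [h6]
        exact hμ
  refine ⟨hrange, ?_⟩
  refine ⟨((QuotientAddGroup.quotientAddEquivOfEq hker).trans
    (QuotientAddGroup.quotientKerEquivRange ψ)).trans
    (AddEquiv.addSubgroupCongr hrange), fun x => ?_⟩
  rfl
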